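/- For a positive integer m, nonzero real λ, and nonnegative integers n, k with k ≤ n, the degenerate Whitney numbers of the second kind satisfy W_{m,λ}(n,k) = (1/(k!·m^k))·∑_{l=0}^{k} C(k,l)·(−1)^{k−l}·(lm+1)_{n,λ}. Moreover, if k > n the right-hand side equals 0. -/

import Mathlib

open Finset

noncomputable def dff (lam x : ℝ) (n : ℕ) : ℝ := ∏ i ∈ Finset.range n, (x - i * lam)

noncomputable def drf (lam x : ℝ) (n : ℕ) : ℝ := ∏ i ∈ Finset.range n, (x + i * lam)

lemma dff_one_nat (l j : ℕ) : dff 1 (l : ℝ) j = (Nat.descFactorial l j : ℝ) := by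
  induction j with
  | zero => simp [dff]
  | succ j ih =>
    rw [dff, Finset.prod_range_succ, ← dff, ih, Nat.descFactorial_succ]
    rcases le_or_gt (j + 1) l with h | h
    · push_cast [Nat.le_of_succ_le h]
      ring
    · have hlj : l ≤ j := by omega
      rcases eq_or_lt_of_le hlj with h' | h'
      · subst h'; simp
      · rw [Nat.descFactorial_eq_zero_iff_lt.mpr h']
        simp

lemma key (k j : ℕ) :
    ∑ l ∈ Finset.range (k + 1), (Nat.choose k l : ℝ) * (-1 : ℝ) ^ (k - l) *
      (Nat.descFactorial l j : ℝ) =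
    if j = k then (Nat.factorial k : ℝ) else 0 := by
  rcases le_or_gt j k with hjk | hjk
  · -- rewrite descFactorial as j! * choose l j
    have h1 : ∀ l, (Nat.descFactorial l j : ℝ) = (Nat.factorial j : ℝ) * (Nat.choose l j : ℝ) := by
      intro l
      rw [Nat.descFactorial_eq_factorial_mul_choose]; push_cast; ring
    simp only [h1]
    -- terms with l < j vanish
    rw [← Finset.sum_range_add_sum_Ico _ (by omega : j ≤ k + 1)]
    have hz : ∑ l ∈ Finset.range j, (Nat.choose k l : ℝ) * (-1 : ℝ) ^ (k - l) *
        ((Nat.factorial j : ℝ) * (Nat.choose l j : ℝ)) = 0 := by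
      apply Finset.sum_eq_zero
      intro l hl
      rw [Nat.choose_eq_zero_of_lt (Finset.mem_range.mp hl)]
      simp
    rw [hz, zero_add]
    have h2 : ∀ l ∈ Finset.Ico j (k + 1),
        (Nat.choose k l : ℝ) * (-1 : ℝ) ^ (k - l) *
          ((Nat.factorial j : ℝ) * (Nat.choose l j : ℝ)) =
        (Nat.factorial j : ℝ) * (Nat.choose k j : ℝ) *
          ((-1 : ℝ) ^ (k - l) * (Nat.choose (k - j) (l - j) : ℝ)) := by
      intro l hl
      obtain ⟨hjl, hlk⟩ := Finset.mem_Ico.mp hl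
      have hlk' : l ≤ k := by omega
      have := Nat.choose_mul (n := k) hjl
      have : (Nat.choose k l : ℝ) * (Nat.choose l j : ℝ) =
          (Nat.choose k j : ℝ) * (Nat.choose (k - j) (l - j) : ℝ) := by
        exact_mod_cast congrArg (Nat.cast : ℕ → ℝ) this
      linear_combination ((-1 : ℝ) ^ (k - l) * (Nat.factorial j : ℝ)) * this
    rw [Finset.sum_congr rfl h2, ← Finset.mul_sum]
    -- reindex i = l - j
    have h3 : ∑ l ∈ Finset.Ico j (k + 1),
        (-1 : ℝ) ^ (k - l) * (Nat.choose (k - j) (l - j) : ℝ) =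
        ∑ i ∈ Finset.range (k - j + 1), (-1 : ℝ) ^ (k - j - i) * (Nat.choose (k - j) i : ℝ) := by
      rw [Finset.sum_bij (fun l _ => l - j)]
      · intro l hl; obtain ⟨h1, h2⟩ := Finset.mem_Ico.mp hl
        exact Finset.mem_range.mpr (by omega)
      · intro a ha b hb hab
        obtain ⟨ha1, _⟩ := Finset.mem_Ico.mp ha
        obtain ⟨hb1, _⟩ := Finset.mem_Ico.mp hb
        omega
      · intro i hi
        exact ⟨i + j, Finset.mem_Ico.mpr (by have := Finset.mem_range.mp hi; omega), by omega⟩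
      · intro l hl
        obtain ⟨h1, h2⟩ := Finset.mem_Ico.mp hl
        congr 2
        omega
    rw [h3]
    -- alternating sum
    have h4 : ∑ i ∈ Finset.range (k - j + 1), (-1 : ℝ) ^ (k - j - i) * (Nat.choose (k - j) i : ℝ)
        = if k - j = 0 then 1 else 0 := by
      have : ∀ i ∈ Finset.range (k - j + 1),
          (-1 : ℝ) ^ (k - j - i) * (Nat.choose (k - j) i : ℝ) =
          (-1 : ℝ) ^ (k - j) * ((-1 : ℝ) ^ i * (Nat.choose (k - j) i : ℝ)) := by
        intro i hi
        have hi' : i ≤ k - j := by have := Finset.mem_range.mp hi; omega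
        have h0 : (-1 : ℝ) ^ (k - j) = (-1 : ℝ) ^ (k - j - i) * (-1 : ℝ) ^ i := by
          rw [← pow_add]; congr 1; omega
        have hp : (-1 : ℝ) ^ (k - j - i) = (-1 : ℝ) ^ (k - j) * (-1 : ℝ) ^ i := by
          rw [h0, mul_assoc, ← pow_add, Even.neg_one_pow ⟨i, rfl⟩, mul_one]
        rw [hp, mul_assoc]
      rw [Finset.sum_congr rfl this, ← Finset.mul_sum]
      have := Int.alternating_sum_range_choose (n := k - j)
      have hc : (∑ i ∈ Finset.range (k - j + 1), ((-1 : ℝ) ^ i * (Nat.choose (k-j) i : ℝ)))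
          = ((∑ i ∈ Finset.range (k - j + 1), ((-1 : ℤ) ^ i * (Nat.choose (k-j) i : ℤ))) : ℤ) := by
        push_cast; rfl
      rw [hc, this]
      rcases eq_or_ne (k - j) 0 with h | h
      · simp [h]
      · simp [h]
    rw [h4]
    rcases eq_or_ne j k with h | h
    · subst h; simp
    · rw [if_neg (by omega), if_neg h]; ring
  · -- j > k : every descFactorial l j with l ≤ k < j is zero
    rw [if_neg (by omega)]
    apply Finset.sum_eq_zero
    intro l hl
    have : l < j := by have := Finset.mem_range.mp hl; omega
    rw [Nat.descFactorial_eq_zero_iff_lt.mpr this]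
    simp

theorem stmt8 (m : ℕ) (hm : 1 ≤ m) (lam : ℝ) (hlam : lam ≠ 0) (W : ℕ → ℕ → ℝ)
    (hW : ∀ (x : ℝ) (n : ℕ), dff lam ((m : ℝ) * x + 1) n =
      ∑ k ∈ Finset.range (n + 1), W n k * (m : ℝ) ^ k * dff 1 x k)
    (n k : ℕ) :
    (k ≤ n → W n k = (1 / ((Nat.factorial k : ℝ) * (m : ℝ) ^ k)) *
      ∑ l ∈ Finset.range (k + 1), (Nat.choose k l : ℝ) * (-1 : ℝ) ^ (k - l) *
        dff lam ((l : ℝ) * m + 1) n) ∧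
    (n < k → (1 / ((Nat.factorial k : ℝ) * (m : ℝ) ^ k)) *
      ∑ l ∈ Finset.range (k + 1), (Nat.choose k l : ℝ) * (-1 : ℝ) ^ (k - l) *
        dff lam ((l : ℝ) * m + 1) n = 0) := by
  have hsum : ∑ l ∈ Finset.range (k + 1), (Nat.choose k l : ℝ) * (-1 : ℝ) ^ (k - l) *
      dff lam ((l : ℝ) * m + 1) n =
      ∑ j ∈ Finset.range (n + 1), W n j * (m : ℝ) ^ j *
        (if j = k then (Nat.factorial k : ℝ) else 0) := by
    have h1 : ∀ l : ℕ, dff lam ((l : ℝ) * m + 1) n =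
        ∑ j ∈ Finset.range (n + 1), W n j * (m : ℝ) ^ j * (Nat.descFactorial l j : ℝ) := by
      intro l
      have := hW (l : ℝ) n
      rw [mul_comm ((m : ℝ)) (l : ℝ)] at this
      rw [this]
      exact Finset.sum_congr rfl fun j _ => by rw [dff_one_nat]
    simp only [h1, Finset.mul_sum]
    rw [Finset.sum_comm]
    apply Finset.sum_congr rfl
    intro j _
    rw [← key k j, Finset.mul_sum]
    apply Finset.sum_congr rfl
    intro l _
    ring
  have hne : (Nat.factorial k : ℝ) * (m : ℝ) ^ k ≠ 0 := by
    apply mul_ne_zero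
    · exact_mod_cast Nat.factorial_ne_zero k
    · apply pow_ne_zero; exact_mod_cast Nat.one_le_iff_ne_zero.mp hm
  constructor
  · intro hkn
    rw [hsum, Finset.sum_eq_single k (fun j _ hj => by rw [if_neg hj]; ring)
      (fun h => absurd (Finset.mem_range.mpr (by omega)) h), if_pos rfl]
    field_simp
  · intro hnk
    rw [hsum]
    have : ∀ j ∈ Finset.range (n + 1), W n j * (m : ℝ) ^ j *
        (if j = k then (Nat.factorial k : ℝ) else 0) = 0 := by
      intro j hj
      rw [if_neg (by have := Finset.mem_range.mp hj; omega)]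
      ring
    rw [Finset.sum_eq_zero this, mul_zero]
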